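/- arXiv:1112.0104 — 2 statements merged into one kernel-verified Lean document; each statement's English description precedes it below -/
import Mathlib

section
/- Suppose d ≥ 1, ℙ satisfies the 'usual conditions' and 𝔼(Σ_x ω_{0,x}|x|²) < ∞. Assume 𝔼(1/ω_{0,ê}) < ∞ for some ê ∈ {±ê_1,…,±ê_d}. Then χ(ω,nê)/n → 0 as n → ∞, for ℙ-almost every ω. -/
open MeasureTheory Filter Topology Set
open scoped ENNReal NNReal

noncomputable section

namespace RCM

/-- Vertices of the lattice `ℤ^d`. -/
abbrev V (d : ℕ) := Fin d → ℤ

/-- Euclidean norm of a vector in `ℝ^d`. -/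
def rnorm {d : ℕ} (y : Fin d → ℝ) : ℝ := Real.sqrt (∑ i, (y i) ^ 2)

/-- The canonical embedding `ℤ^d → ℝ^d`. -/
def toR {d : ℕ} (x : V d) : Fin d → ℝ := fun i => (x i : ℝ)

/-- Euclidean norm of a lattice vector. -/
def vnorm {d : ℕ} (x : V d) : ℝ := rnorm (toR x)

/-- The `i`-th coordinate unit vector of `ℤ^d`. -/
def unit {d : ℕ} (i : Fin d) : V d := fun j => if j = i then 1 else 0

/-- Nearest-neighbour adjacency on `ℤ^d`. -/
def adj {d : ℕ} (x y : V d) : Prop := (∑ i, |x i - y i|) = 1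

/-- A configuration of conductances on `ℤ^d`: nonnegative, symmetric, with
`π_ω(x) = ∑_y ω_{xy} ∈ (0,∞)` for every `x`. -/
structure Cfg (d : ℕ) where
  w : V d → V d → ℝ
  nonneg : ∀ x y, 0 ≤ w x y
  symm : ∀ x y, w x y = w y x
  summ : ∀ x, Summable fun y => w x y
  pos : ∀ x, 0 < ∑' y, w x y

variable {d : ℕ}

/-- The product σ-algebra on the space of conductance configurations. -/
instance : MeasurableSpace (Cfg d) := MeasurableSpace.comap Cfg.w inferInstance

/-- `π_ω(x) := ∑_y ω_{xy}`. -/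
def piC (ω : Cfg d) (x : V d) : ℝ := ∑' y, ω.w x y

/-- The one-step transition probabilities `P_ω(x,y) = ω_{xy}/π_ω(x)` of the random walk
among the conductances `ω`. -/
def step (ω : Cfg d) (x y : V d) : ℝ := ω.w x y / piC ω x

/-- `n`-step transition probabilities `P_ω^n(x,y)`. -/
def Pn (ω : Cfg d) : ℕ → V d → V d → ℝ
  | 0, x, y => if x = y then 1 else 0
  | n + 1, x, y => ∑' z, Pn ω n x z * step ω z y

/-- The shift `τ_z` acting on configurations: `(τ_zω)_{xy} = ω_{x+z,y+z}`. -/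
def shiftC (z : V d) (ω : Cfg d) : Cfg d where
  w x y := ω.w (x + z) (y + z)
  nonneg x y := ω.nonneg _ _
  symm x y := ω.symm _ _
  summ x := by
    have h := (Equiv.addRight z).summable_iff (f := fun y => ω.w (x + z) y)
    exact h.mpr (ω.summ (x + z))
  pos x := by
    have h := (Equiv.addRight z).tsum_eq (f := fun y => ω.w (x + z) y)
    simp only [Equiv.coe_addRight] at h
    calc (0:ℝ) < ∑' y, ω.w (x + z) y := ω.pos (x + z)
    _ = ∑' y, ω.w (x + z) (y + z) := h.symm

/-- The law of the discrete-time random walk among the conductances `ω` started at `x₀`,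
characterized through its cylinder probabilities. -/
def IsPathLaw (ω : Cfg d) (x₀ : V d) (μ : Measure (ℕ → V d)) : Prop :=
  IsProbabilityMeasure μ ∧
  ∀ (n : ℕ) (p : ℕ → V d),
    μ {X | ∀ i ≤ n, X i = p i} =
      ENNReal.ofReal ((if p 0 = x₀ then (1:ℝ) else 0) *
        ∏ i ∈ Finset.range n, step ω (p i) (p (i + 1)))

/-- The measure `ℚ(dω) = Z⁻¹ π_ω(0) ℙ(dω)`. -/
def Qmeas (P : Measure (Cfg d)) : Measure (Cfg d) :=
  (ENNReal.ofReal (∫ ω, piC ω 0 ∂P))⁻¹ •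
    P.withDensity fun ω => ENNReal.ofReal (piC ω 0)

/-- Bounded measurable real functions on the space of environments. -/
def BddMeas (f : Cfg d → ℝ) : Prop := Measurable f ∧ ∃ C, ∀ ω, |f ω| ≤ C

/-- The "usual conditions" on an environment law: a translation-invariant probability
measure with `𝔼 π_ω(0) < ∞`, irreducible, and ergodic with respect to translations. -/
structure UsualConds (P : Measure (Cfg d)) : Prop where
  prob : IsProbabilityMeasure P
  inv : ∀ z : V d, MeasurePreserving (shiftC z) P P
  integ : Integrable (fun ω => piC ω 0) P
  irred : ∀ x : V d, P {ω | ∃ n, 0 < Pn ω n 0 x} = 1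
  erg : ∀ A : Set (Cfg d), MeasurableSet A → (∀ z, shiftC z ⁻¹' A = A) → P A = 0 ∨ P A = 1

/-- The transition kernel `𝒫` of the environment seen from the particle, applied to a
function `g`: `(𝒫 g)(ω) = ∑_x P_ω(0,x) g(τ_x ω)`. -/
def envK (g : Cfg d → ℝ) (ω : Cfg d) : ℝ := ∑' x, step ω 0 x * g (shiftC x ω)

/-- A local function of the environment: a bounded continuous function of finitely many
conductances. -/
def IsLocal (φ : Cfg d → (Fin d → ℝ)) : Prop :=
  (∃ C, ∀ ω, rnorm (φ ω) ≤ C) ∧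
  ∃ (S : Finset (V d × V d)) (g : ((V d × V d) → ℝ) → Fin d → ℝ),
    Continuous g ∧ ∀ ω, φ ω = g fun e => if e ∈ S then ω.w e.1 e.2 else 0

/-- The gradient `∇φ(ω,x) := φ(τ_xω) − φ(ω)` of a function of the environment. -/
def grad (φ : Cfg d → (Fin d → ℝ)) (ω : Cfg d) (x : V d) : Fin d → ℝ :=
  φ (shiftC x ω) - φ ω

/-- The squared `L²`-norm `𝔼(∑_x ω_{0,x} |u(ω,x)|²)` of a vector field. -/
def energy (P : Measure (Cfg d)) (u : Cfg d → V d → Fin d → ℝ) : ℝ≥0∞ :=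
  ∫⁻ ω, ∑' x, ENNReal.ofReal (ω.w 0 x * rnorm (u ω x) ^ 2) ∂P

/-- The Dirichlet functional `φ ↦ 𝔼(∑_x ω_{0,x} |x + ∇_xφ(ω)|²)`. -/
def dirichlet (P : Measure (Cfg d)) (φ : Cfg d → (Fin d → ℝ)) : ℝ≥0∞ :=
  energy P fun ω x => toR x + grad φ ω x

/-- The infimum of the Dirichlet functional over local functions. -/
def dirichletInf (P : Measure (Cfg d)) : ℝ≥0∞ :=
  ⨅ φ : {φ : Cfg d → Fin d → ℝ // IsLocal φ}, dirichlet P φ.1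

/-- `χ` is the corrector for the environment law `P`: a shift-covariant measurable
function which is the `L²`-limit of the gradients of some minimizing sequence of the
Dirichlet functional. -/
def IsCorrector (P : Measure (Cfg d)) (χ : Cfg d → V d → Fin d → ℝ) : Prop :=
  (∀ x, Measurable fun ω => χ ω x) ∧
  (∀ ω, χ ω 0 = 0) ∧
  (∀ ω x z, χ ω (x + z) - χ ω x = χ (shiftC x ω) z) ∧
  ∃ φs : ℕ → Cfg d → Fin d → ℝ,
    (∀ n, IsLocal (φs n)) ∧
    Tendsto (fun n => dirichlet P (φs n)) atTop (𝓝 (dirichletInf P)) ∧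
    Tendsto (fun n => energy P fun ω x => grad (φs n) ω x - χ ω x) atTop (𝓝 0)

/-- The harmonic coordinate `Ψ(ω,x) := x + χ(ω,x)`. -/
def Psi (χ : Cfg d → V d → Fin d → ℝ) (ω : Cfg d) (x : V d) : Fin d → ℝ :=
  toR x + χ ω x

/-- The second-moment condition `𝔼(∑_x ω_{0,x}|x|²) < ∞`. -/
def SecondMoment (P : Measure (Cfg d)) : Prop :=
  ∫⁻ ω, ∑' x, ENNReal.ofReal (ω.w 0 x * vnorm x ^ 2) ∂P < ⊤

/-- The inverse-moment condition `𝔼(1/ω_{0,x}) < ∞`. -/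
def InvMoment (P : Measure (Cfg d)) (x : V d) : Prop :=
  ∫⁻ ω, (ENNReal.ofReal (ω.w 0 x))⁻¹ ∂P < ⊤

section ErgodicTools
set_option linter.unusedSectionVars false


variable {α : Type*} [MeasurableSpace α] {μ : Measure α}

/-- Running maxima of Birkhoff sums, with `maxS T g 0 x = 0`. -/
def maxS (T : α → α) (g : α → ℝ) : ℕ → α → ℝ
  | 0 => fun _ => 0
  | N + 1 => fun x => max (maxS T g N x) (birkhoffSum T g (N + 1) x)

lemma maxS_nonneg (T : α → α) (g : α → ℝ) : ∀ N x, 0 ≤ maxS T g N x := by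
  intro N
  induction N with
  | zero => intro x; simp [maxS]
  | succ N ih => intro x; exact le_trans (ih x) (le_max_left _ _)

lemma maxS_mono (T : α → α) (g : α → ℝ) {N N' : ℕ} (h : N ≤ N') (x : α) :
    maxS T g N x ≤ maxS T g N' x := by
  induction N' with
  | zero => simp_all
  | succ N' ih =>
    rcases Nat.le_succ_iff.mp h with h' | h'
    · exact le_trans (ih h') (le_max_left _ _)
    · subst h'; rfl

lemma le_maxS (T : α → α) (g : α → ℝ) {k N : ℕ} (h : k ≤ N) (x : α) :
    birkhoffSum T g k x ≤ maxS T g N x := by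
  rcases Nat.eq_zero_or_pos k with rfl | hk
  · simpa [birkhoffSum_zero] using maxS_nonneg T g N x
  · obtain ⟨k, rfl⟩ := Nat.exists_eq_add_of_lt hk
    simp only [Nat.zero_add] at *
    exact le_trans (le_max_right (maxS T g k x) _) (maxS_mono T g h x)

lemma maxS_le (T : α → α) (g : α → ℝ) (N : ℕ) (x : α) :
    maxS T g N x ≤ max 0 (g x + maxS T g N (T x)) := by
  induction N with
  | zero => simp [maxS]
  | succ N ih =>
    refine max_le (le_trans ih ?_) ?_
    · exact max_le_max le_rfl (by gcongr; exact maxS_mono T g (Nat.le_succ N) (T x))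
    · refine le_trans ?_ (le_max_right _ _)
      rw [birkhoffSum_succ']
      gcongr
      exact le_maxS T g (Nat.le_succ N) (T x)

lemma maxS_pos_iff (T : α → α) (g : α → ℝ) (N : ℕ) (x : α) :
    0 < maxS T g N x ↔ ∃ n, 1 ≤ n ∧ n ≤ N ∧ 0 < birkhoffSum T g n x := by
  constructor
  · intro h
    induction N with
    | zero => simp [maxS] at h
    | succ N ih =>
      rcases lt_max_iff.mp h with h' | h'
      · obtain ⟨n, h1, h2, h3⟩ := ih h'
        exact ⟨n, h1, h2.trans (Nat.le_succ N), h3⟩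
      · exact ⟨N + 1, Nat.succ_le_succ (Nat.zero_le N), le_rfl, h'⟩
  · rintro ⟨n, h1, h2, h3⟩
    exact lt_of_lt_of_le h3 (le_maxS T g h2 x)

lemma measurable_birkhoffSum {T : α → α} (hT : Measurable T) {g : α → ℝ}
    (hg : Measurable g) (n : ℕ) : Measurable (birkhoffSum T g n) := by
  unfold birkhoffSum
  exact Finset.measurable_sum _ fun k _ => hg.comp (hT.iterate k)

lemma measurable_maxS {T : α → α} (hT : Measurable T) {g : α → ℝ}
    (hg : Measurable g) (N : ℕ) : Measurable (maxS T g N) := by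
  induction N with
  | zero => exact measurable_const
  | succ N ih => exact ih.max (measurable_birkhoffSum hT hg (N + 1))

lemma integrable_comp_mp {T : α → α} (hT : MeasurePreserving T μ μ) {g : α → ℝ}
    (hg : Integrable g μ) : Integrable (fun x => g (T x)) μ := by
  have h : Integrable g (Measure.map T μ) := by rw [hT.map_eq]; exact hg
  exact h.comp_measurable hT.measurable

lemma integrable_birkhoffSum {T : α → α} (hT : MeasurePreserving T μ μ) {g : α → ℝ}
    (hg : Integrable g μ) (n : ℕ) : Integrable (birkhoffSum T g n) μ := by
  unfold birkhoffSum
  exact integrable_finset_sum _ fun k _ => integrable_comp_mp (hT.iterate k) hg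

lemma integrable_maxS {T : α → α} (hT : MeasurePreserving T μ μ) {g : α → ℝ}
    (hg : Integrable g μ) (N : ℕ) : Integrable (maxS T g N) μ := by
  induction N with
  | zero => exact (integrable_zero _ _ _).congr (by simp [maxS]; exact ae_of_all _ fun _ => rfl)
  | succ N ih =>
    have := ih.sup (integrable_birkhoffSum hT hg (N + 1))
    exact this.congr (by filter_upwards with x; rfl)

/-- Hopf's maximal ergodic lemma. -/
lemma hopf [IsFiniteMeasure μ] {T : α → α} (hT : MeasurePreserving T μ μ) {g : α → ℝ}
    (hgm : Measurable g) (hg : Integrable g μ) (N : ℕ) :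
    0 ≤ ∫ x in {x | 0 < maxS T g N x}, g x ∂μ := by
  set M := maxS T g N with hM
  set E := {x | 0 < M x} with hE
  have hMm : Measurable M := measurable_maxS hT.measurable hgm N
  have hEmeas : MeasurableSet E := measurableSet_lt measurable_const hMm
  have hMint : Integrable M μ := integrable_maxS hT hg N
  have hMTint : Integrable (fun x => M (T x)) μ := integrable_comp_mp hT hMint
  -- on E:  M x - M (T x) ≤ g x
  have key : ∀ x ∈ E, M x - M (T x) ≤ g x := by
    intro x hx
    have := maxS_le T g N x
    have hx' : (0:ℝ) < M x := hx
    rcases max_cases 0 (g x + M (T x)) with ⟨h1, _⟩ | ⟨h1, _⟩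
    · rw [h1] at this; linarith
    · rw [h1] at this; linarith
  have step1 : ∫ x in E, (M x - M (T x)) ∂μ ≤ ∫ x in E, g x ∂μ :=
    setIntegral_mono_on ((hMint.sub hMTint).integrableOn) (hg.integrableOn) hEmeas key
  refine le_trans ?_ step1
  -- ∫_E (M - M∘T) ≥ ∫_α (M - M∘T) = 0
  have hsplit : ∫ x, (M x - M (T x)) ∂μ
      = ∫ x in E, (M x - M (T x)) ∂μ + ∫ x in Eᶜ, (M x - M (T x)) ∂μ :=
    (integral_add_compl hEmeas (hMint.sub hMTint)).symm
  have hcompl : ∫ x in Eᶜ, (M x - M (T x)) ∂μ ≤ 0 := by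
    refine setIntegral_nonpos hEmeas.compl fun x hx => ?_
    have h0 : M x ≤ 0 := not_lt.mp hx
    have := maxS_nonneg T g N (T x)
    simp only [hM] at *
    linarith
  have htot : ∫ x, (M x - M (T x)) ∂μ = 0 := by
    rw [integral_sub hMint hMTint]
    have : ∫ x, M (T x) ∂μ = ∫ x, M x ∂μ := by
      rw [← integral_map hT.aemeasurable hMm.aestronglyMeasurable, hT.map_eq]
    rw [this, sub_self]
  linarith [hsplit ▸ htot, hcompl]


lemma birkhoffSum_sub_const (T : α → α) (f : α → ℝ) (c : ℝ) (n : ℕ) (x : α) :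
    birkhoffSum T (fun y => f y - c) n x = birkhoffSum T f n x - n * c := by
  unfold birkhoffSum
  rw [Finset.sum_sub_distrib, Finset.sum_const, Finset.card_range, nsmul_eq_mul]

/-- The maximal ergodic inequality. -/
lemma maximal [IsFiniteMeasure μ] {T : α → α} (hT : MeasurePreserving T μ μ) {f : α → ℝ}
    (hfm : Measurable f) (hf : Integrable f μ) {c : ℝ} (hc : 0 < c) :
    μ {x | ∃ n, 1 ≤ n ∧ c * n < birkhoffSum T (fun y => |f y|) n x}
      ≤ ENNReal.ofReal ((∫ y, |f y| ∂μ) / c) := by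
  set g : α → ℝ := fun y => |f y| - c with hg
  have hgm : Measurable g := hfm.abs.sub measurable_const
  have hgi : Integrable g μ := hf.abs.sub (integrable_const c)
  have hSg : ∀ n x, birkhoffSum T g n x = birkhoffSum T (fun y => |f y|) n x - n * c :=
    fun n x => birkhoffSum_sub_const T (fun y => |f y|) c n x
  have hset : {x | ∃ n, 1 ≤ n ∧ c * n < birkhoffSum T (fun y => |f y|) n x}
      = ⋃ N, {x | 0 < maxS T g N x} := by
    ext x
    simp only [mem_setOf_eq, mem_iUnion]
    constructor
    · rintro ⟨n, h1, h2⟩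
      exact ⟨n, (maxS_pos_iff T g n x).mpr ⟨n, h1, le_rfl, by rw [hSg]; linarith [h2]⟩⟩
    · rintro ⟨N, hN⟩
      obtain ⟨n, h1, _, h3⟩ := (maxS_pos_iff T g N x).mp hN
      rw [hSg] at h3
      exact ⟨n, h1, by linarith⟩
  have hbound : ∀ N, μ {x | 0 < maxS T g N x} ≤ ENNReal.ofReal ((∫ y, |f y| ∂μ) / c) := by
    intro N
    have h0 := hopf hT hgm hgi N
    set A := {x | 0 < maxS T g N x} with hA
    have hAm : MeasurableSet A :=
      measurableSet_lt measurable_const (measurable_maxS hT.measurable hgm N)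
    have hsplit : ∫ x in A, g x ∂μ = ∫ x in A, |f x| ∂μ - c * (μ A).toReal := by
      rw [hg]
      rw [integral_sub hf.abs.integrableOn (integrable_const c).integrableOn]
      rw [setIntegral_const, smul_eq_mul, mul_comm]; rfl
    have hle : ∫ x in A, |f x| ∂μ ≤ ∫ x, |f x| ∂μ :=
      setIntegral_le_integral hf.abs (Filter.Eventually.of_forall fun x => abs_nonneg _)
    have h1 : c * (μ A).toReal ≤ ∫ y, |f y| ∂μ := by
      rw [hsplit] at h0; linarith
    have h2 : (μ A).toReal ≤ (∫ y, |f y| ∂μ) / c := by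
      rw [le_div_iff₀ hc]; linarith
    exact (ENNReal.le_ofReal_iff_toReal_le (measure_ne_top μ A) (by positivity)).mpr h2
  rw [hset]
  have hmono : Monotone fun N => {x | 0 < maxS T g N x} := by
    intro N N' h x hx
    exact lt_of_lt_of_le hx (maxS_mono T g h x)
  rw [hmono.directed_le.measure_iUnion]
  exact iSup_le hbound


lemma birkhoffSum_decomp (T : α → α) (h g : α → ℝ) (n : ℕ) (x : α) :
    birkhoffSum T (fun y => h y + (g (T y) - g y)) n x
      = birkhoffSum T h n x + (g (T^[n] x) - g x) := by
  unfold birkhoffSum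
  rw [Finset.sum_add_distrib]
  congr 1
  have : ∀ k, g (T (T^[k] x)) = g (T^[k + 1] x) := by
    intro k; rw [Function.iterate_succ_apply']
  calc ∑ k ∈ Finset.range n, (g (T (T^[k] x)) - g (T^[k] x))
      = ∑ k ∈ Finset.range n, (g (T^[k + 1] x) - g (T^[k] x)) := by
        refine Finset.sum_congr rfl fun k _ => by rw [this k]
    _ = g (T^[n] x) - g (T^[0] x) := Finset.sum_range_sub (fun k => g (T^[k] x)) n
    _ = g (T^[n] x) - g x := by rw [Function.iterate_zero_apply]

lemma abs_birkhoffSum_le (T : α → α) (h : α → ℝ) (n : ℕ) (x : α) :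
    |birkhoffSum T h n x| ≤ birkhoffSum T (fun y => |h y|) n x :=
  Finset.abs_sum_le_sum_abs _ _

/-- A.e. vanishing of Birkhoff averages for functions approximable in `L¹` by
coboundaries of bounded functions. -/
lemma ae_tendsto_birkhoff_div [IsProbabilityMeasure μ] {T : α → α}
    (hT : MeasurePreserving T μ μ) {f : α → ℝ}
    (happrox : ∀ ε : ℝ, 0 < ε → ∃ g h : α → ℝ, ∃ K : ℝ, Measurable g ∧ (∀ x, |g x| ≤ K) ∧
      Measurable h ∧ Integrable h μ ∧ (∫ x, |h x| ∂μ) ≤ ε ∧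
      ∀ x, f x = h x + (g (T x) - g x)) :
    ∀ᵐ x ∂μ, Tendsto (fun n : ℕ => birkhoffSum T f n x / n) atTop (𝓝 0) := by
  set G : ℕ → Set α :=
    fun j => {x | ∀ᶠ n in atTop, |birkhoffSum T f n x| ≤ n / (j + 1)} with hG
  -- each complement is null
  have claim1 : ∀ j : ℕ, μ (G j)ᶜ = 0 := by
    intro j
    set c : ℝ := 1 / ((j : ℝ) + 1) with hc
    have hcpos : 0 < c := by positivity
    have key : ∀ ε : ℝ, 0 < ε → μ (G j)ᶜ ≤ ENNReal.ofReal (ε / (c / 2)) := by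
      intro ε hε
      obtain ⟨g, h, K, hgm, hgK, hhm, hhi, hhint, hdecomp⟩ := happrox ε hε
      have hsub : (G j)ᶜ ⊆
          {x | ∃ n, 1 ≤ n ∧ (c / 2) * n < birkhoffSum T (fun y => |h y|) n x} := by
        intro x hx
        have hfreq : ∃ᶠ n in atTop, ¬ |birkhoffSum T f n x| ≤ n / (j + 1) :=
          Filter.not_eventually.mp hx
        obtain ⟨m, hm⟩ := exists_nat_gt ((4 * |K| + 4) / c)
        obtain ⟨n, hnm, hn⟩ := (Filter.frequently_atTop.mp hfreq) m
        rw [not_le] at hn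
        have hn' : c * n < |birkhoffSum T f n x| := by
          calc c * n = n / (j + 1) := by rw [hc]; ring
            _ < _ := hn
        have hcn : 4 * |K| + 4 < c * n := by
          have h1 : (m : ℝ) ≤ n := by exact_mod_cast hnm
          have h2 : (4 * |K| + 4) / c < (n : ℝ) := lt_of_lt_of_le hm h1
          rw [div_lt_iff₀ hcpos] at h2
          linarith [h2, mul_comm c (n : ℝ)]
        have hnpos : 1 ≤ n := by
          rcases Nat.eq_zero_or_pos n with rfl | hp
          · exfalso
            simp only [Nat.cast_zero, mul_zero] at hcn
            have := abs_nonneg K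
            linarith
          · exact hp
        refine ⟨n, hnpos, ?_⟩
        have hdec : birkhoffSum T f n x = birkhoffSum T h n x + (g (T^[n] x) - g x) := by
          have hfe : f = fun y => h y + (g (T y) - g y) := funext hdecomp
          rw [hfe, birkhoffSum_decomp]
        have habs : |birkhoffSum T f n x| - 2 * |K| ≤ |birkhoffSum T h n x| := by
          have h1 : |g (T^[n] x)| ≤ K := hgK _
          have h2 : |g x| ≤ K := hgK _
          have h3 : K ≤ |K| := le_abs_self K
          have h4 : |g (T^[n] x) - g x| ≤ 2 * |K| := by
            calc |g (T^[n] x) - g x| ≤ |g (T^[n] x)| + |g x| := abs_sub _ _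
              _ ≤ 2 * |K| := by linarith
          have h5 := abs_add_le (birkhoffSum T h n x) (g (T^[n] x) - g x)
          rw [hdec]
          linarith
        have h6 := abs_birkhoffSum_le T h n x
        have h7 : (c / 2) * (n : ℝ) = c * n / 2 := by ring
        rw [h7]
        linarith
      refine le_trans (measure_mono hsub) ?_
      refine le_trans (maximal hT hhm hhi (by positivity)) ?_
      exact ENNReal.ofReal_le_ofReal (by gcongr)
    have key2 : ∀ ε : ℝ, 0 < ε → μ (G j)ᶜ ≤ ENNReal.ofReal ε := by
      intro ε hε
      have := key (ε * (c / 2)) (by positivity)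
      rwa [mul_div_assoc, div_self (by positivity), mul_one] at this
    refine le_antisymm ?_ zero_le
    refine ENNReal.le_of_forall_pos_le_add fun ε hε _ => ?_
    have h := key2 (ε : ℝ) (by exact_mod_cast hε)
    simpa using h
  -- conclusion
  have hnull : μ (⋃ j, (G j)ᶜ) = 0 := measure_iUnion_null claim1
  rw [ae_iff]
  refine measure_mono_null ?_ hnull
  intro x hx
  simp only [mem_setOf_eq] at hx
  by_contra hmem
  simp only [mem_iUnion, mem_compl_iff, not_exists, not_not] at hmem
  apply hx
  rw [NormedAddCommGroup.tendsto_nhds_zero]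
  intro ε hε
  obtain ⟨j, hj⟩ := exists_nat_one_div_lt hε
  have h1 := hmem j
  rw [hG] at h1
  simp only [mem_setOf_eq] at h1
  filter_upwards [h1, Filter.eventually_ge_atTop 1] with n hn hn1
  have hnpos : (0 : ℝ) < n := by exact_mod_cast hn1
  rw [Real.norm_eq_abs, abs_div, abs_of_pos hnpos]
  calc |birkhoffSum T f n x| / n ≤ ((n : ℝ) / (j + 1)) / n := by gcongr
    _ = 1 / ((j : ℝ) + 1) := by field_simp
    _ < ε := by exact_mod_cast hj


end ErgodicTools

section Application

variable {d : ℕ}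

lemma Cfg.ext' {ω₁ ω₂ : Cfg d} (h : ω₁.w = ω₂.w) : ω₁ = ω₂ := by
  cases ω₁; cases ω₂; cases h; rfl

lemma shiftC_shiftC (z z' : V d) (ω : Cfg d) :
    shiftC z (shiftC z' ω) = shiftC (z' + z) ω := by
  refine Cfg.ext' ?_
  funext x y
  show ω.w (x + z + z') (y + z + z') = ω.w (x + (z' + z)) (y + (z' + z))
  rw [add_assoc, add_comm z z', add_assoc, add_comm z z']

lemma shiftC_zero (ω : Cfg d) : shiftC (0 : V d) ω = ω := by
  refine Cfg.ext' ?_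
  funext x y
  show ω.w (x + 0) (y + 0) = ω.w x y
  rw [add_zero, add_zero]

lemma iter_shiftC (e : V d) (n : ℕ) (ω : Cfg d) :
    (shiftC e)^[n] ω = shiftC ((n : ℤ) • e) ω := by
  induction n with
  | zero => simp [shiftC_zero]
  | succ n ih =>
    rw [Function.iterate_succ_apply', ih, shiftC_shiftC]
    congr 1
    push_cast
    rw [add_smul, one_smul]

lemma cocycle {χ : Cfg d → V d → Fin d → ℝ} (h0 : ∀ ω, χ ω 0 = 0)
    (hcov : ∀ ω x z, χ ω (x + z) - χ ω x = χ (shiftC x ω) z) (e : V d) (n : ℕ) (ω : Cfg d) :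
    χ ω ((n : ℤ) • e) = birkhoffSum (shiftC e) (fun ω' => χ ω' e) n ω := by
  induction n with
  | zero => simpa using h0 ω
  | succ n ih =>
    rw [birkhoffSum_succ, ← ih, iter_shiftC, ← hcov ω ((n : ℤ) • e) e]
    have : ((n : ℤ) + 1) • e = (n : ℤ) • e + e := by rw [add_smul, one_smul]
    push_cast
    rw [this]
    abel

lemma measurable_w : Measurable (Cfg.w : Cfg d → V d → V d → ℝ) :=
  measurable_iff_comap_le.mpr le_rfl

lemma measurable_w_apply (a b : V d) : Measurable fun ω : Cfg d => ω.w a b :=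
  ((measurable_pi_apply b).comp (measurable_pi_apply a)).comp measurable_w

lemma continuous_rnorm : Continuous (rnorm (d := d)) := by
  unfold rnorm
  exact Real.continuous_sqrt.comp (continuous_finset_sum _ fun i _ =>
    (continuous_apply i).pow 2)

lemma rnorm_nonneg (y : Fin d → ℝ) : 0 ≤ rnorm y := Real.sqrt_nonneg _

lemma abs_apply_le_rnorm (y : Fin d → ℝ) (i : Fin d) : |y i| ≤ rnorm y := by
  rw [← Real.sqrt_sq_eq_abs]
  exact Real.sqrt_le_sqrt (Finset.single_le_sum (f := fun j => y j ^ 2)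
    (fun j _ => sq_nonneg _) (Finset.mem_univ i))

lemma measurable_of_isLocal {φ : Cfg d → Fin d → ℝ} (hφ : IsLocal φ) : Measurable φ := by
  obtain ⟨-, S, g, hg, hrep⟩ := hφ
  have : φ = fun ω => g fun e => if e ∈ S then ω.w e.1 e.2 else 0 := funext hrep
  rw [this]
  refine hg.measurable.comp ?_
  refine measurable_pi_lambda _ fun e => ?_
  by_cases he : e ∈ S
  · simpa [he] using measurable_w_apply e.1 e.2
  · simpa [he] using measurable_const

lemma bound_of_isLocal {φ : Cfg d → Fin d → ℝ} (hφ : IsLocal φ) :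
    ∃ K, ∀ ω i, |φ ω i| ≤ K := by
  obtain ⟨⟨C, hC⟩, -⟩ := hφ
  exact ⟨C, fun ω i => le_trans (abs_apply_le_rnorm _ i) (hC ω)⟩

lemma ae_w_pos {P : Measure (Cfg d)} (e : V d) (hinv : InvMoment P e) :
    ∀ᵐ ω ∂P, 0 < ω.w 0 e := by
  by_contra hcon
  rw [ae_iff] at hcon
  set S : Set (Cfg d) := {ω | ¬ 0 < ω.w 0 e} with hS
  have hSm : MeasurableSet S :=
    (measurableSet_lt measurable_const (measurable_w_apply 0 e)).compl
  have htop : ∫⁻ ω in S, (ENNReal.ofReal (ω.w 0 e))⁻¹ ∂P = ⊤ := by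
    have heq : ∀ ω ∈ S, (ENNReal.ofReal (ω.w 0 e))⁻¹ = ⊤ := by
      intro ω hω
      have : ω.w 0 e ≤ 0 := not_lt.mp hω
      rw [ENNReal.ofReal_eq_zero.mpr this, ENNReal.inv_zero]
    rw [setLIntegral_congr_fun hSm heq, setLIntegral_const]
    exact ENNReal.top_mul hcon
  have hle : ∫⁻ ω in S, (ENNReal.ofReal (ω.w 0 e))⁻¹ ∂P
      ≤ ∫⁻ ω, (ENNReal.ofReal (ω.w 0 e))⁻¹ ∂P := setLIntegral_le_lintegral _ _
  rw [htop] at hle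
  exact absurd (lt_of_le_of_lt (top_le_iff.mp hle ▸ le_rfl) hinv) (lt_irrefl _)

end Application

/-- (Directional sublinearity of the corrector)
Suppose `d ≥ 1`, `ℙ` satisfies the "usual conditions", `𝔼(∑_x ω_{0,x}|x|²) < ∞`, and
`𝔼(1/ω_{0,ê}) < ∞` for some coordinate direction `ê ∈ {±ê_1,…,±ê_d}`.  Then
`χ(ω,nê)/n → 0` as `n → ∞`, for `ℙ`-almost every `ω`. -/
theorem statement11 {d : ℕ} (hd : 1 ≤ d) (P : Measure (Cfg d)) (hP : UsualConds P)
    (hmom : SecondMoment P)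
    (e : V d) (he : ∃ i : Fin d, e = unit i ∨ e = -unit i)
    (hinvmom : InvMoment P e)
    (χ : Cfg d → V d → Fin d → ℝ) (hχ : IsCorrector P χ) :
    ∀ᵐ ω ∂P,
      Tendsto (fun n : ℕ => (n : ℝ)⁻¹ • χ ω ((n : ℤ) • e)) atTop (𝓝 0) := by
  haveI : IsProbabilityMeasure P := hP.prob
  have hTmp : MeasurePreserving (shiftC e) P P := hP.inv e
  obtain ⟨hmeas, hzero, hcov, φs, hloc, hdir, hen⟩ := hχ
  have hwpos : ∀ᵐ ω ∂P, 0 < ω.w 0 e := ae_w_pos e hinvmom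
  set δ : ℕ → ℝ≥0∞ := fun m =>
    ∫⁻ ω, ENNReal.ofReal (ω.w 0 e * rnorm (grad (φs m) ω e - χ ω e) ^ 2) ∂P with hδdef
  have hδle : ∀ m, δ m ≤ energy P fun ω x => grad (φs m) ω x - χ ω x := by
    intro m
    refine lintegral_mono fun ω => ?_
    exact ENNReal.le_tsum e
  have hδ0 : Tendsto δ atTop (𝓝 0) :=
    tendsto_of_tendsto_of_tendsto_of_le_of_le tendsto_const_nhds hen (fun m => zero_le) hδle
  set I : ℝ≥0∞ := ∫⁻ ω, (ENNReal.ofReal (ω.w 0 e))⁻¹ ∂P with hIdef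
  have hItop : I ≠ ⊤ := hinvmom.ne
  have main : ∀ i : Fin d, ∀ᵐ ω ∂P,
      Tendsto (fun n : ℕ => birkhoffSum (shiftC e) (fun ω' => χ ω' e i) n ω / n)
        atTop (𝓝 0) := by
    intro i
    refine ae_tendsto_birkhoff_div hTmp ?_
    intro ε hε
    set J : ℝ := I.toReal + 1 with hJ
    have hJ1 : 1 ≤ J := le_add_of_nonneg_left ENNReal.toReal_nonneg
    have hJpos : 0 < J := lt_of_lt_of_le one_pos hJ1
    set t : ℝ := ε / J with ht
    have htpos : 0 < t := div_pos hε hJpos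
    have hb : (0 : ℝ≥0∞) < ENNReal.ofReal (ε / 2) / ENNReal.ofReal (1 / (2 * t)) :=
      ENNReal.div_pos (ENNReal.ofReal_pos.mpr (by positivity)).ne' ENNReal.ofReal_ne_top
    obtain ⟨m, hm⟩ := (hδ0.eventually_lt_const hb).exists
    set vec : Cfg d → Fin d → ℝ := fun ω => grad (φs m) ω e - χ ω e with hvec
    set hfun : Cfg d → ℝ := fun ω => χ ω e i - (φs m (shiftC e ω) i - φs m ω i) with hhfun
    set g : Cfg d → ℝ := fun ω => φs m ω i with hg
    obtain ⟨K, hK⟩ := bound_of_isLocal (hloc m)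
    have hφmeas : Measurable (φs m) := measurable_of_isLocal (hloc m)
    have hhm : Measurable hfun :=
      ((measurable_pi_apply i).comp (hmeas e)).sub
        (((measurable_pi_apply i).comp (hφmeas.comp hTmp.measurable)).sub
          ((measurable_pi_apply i).comp hφmeas))
    have hvecmeas : Measurable vec :=
      ((hφmeas.comp hTmp.measurable).sub hφmeas).sub (hmeas e)
    have habs : ∀ ω, |hfun ω| ≤ rnorm (vec ω) := by
      intro ω
      have hv : hfun ω = -(vec ω i) := by
        show χ ω e i - (φs m (shiftC e ω) i - φs m ω i)
          = -((grad (φs m) ω e - χ ω e) i)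
        show χ ω e i - (φs m (shiftC e ω) i - φs m ω i)
          = -((φs m (shiftC e ω) - φs m ω) i - χ ω e i)
        simp only [Pi.sub_apply]
        ring
      rw [hv, abs_neg]
      exact abs_apply_le_rnorm _ i
    have hptwise : ∀ᵐ ω ∂P, ENNReal.ofReal |hfun ω| ≤
        ENNReal.ofReal (t / 2) * (ENNReal.ofReal (ω.w 0 e))⁻¹
        + ENNReal.ofReal (1 / (2 * t)) * ENNReal.ofReal (ω.w 0 e * rnorm (vec ω) ^ 2) := by
      filter_upwards [hwpos] with ω hw
      have hr : 0 ≤ rnorm (vec ω) := rnorm_nonneg _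
      have hreal : |hfun ω| ≤ t / 2 * (1 / ω.w 0 e)
          + 1 / (2 * t) * (ω.w 0 e * rnorm (vec ω) ^ 2) := by
        have h1 : |hfun ω| ≤ rnorm (vec ω) := habs ω
        have hx := sq_nonneg (t - ω.w 0 e * rnorm (vec ω))
        have h2 : t / 2 * (1 / ω.w 0 e) + 1 / (2 * t) * (ω.w 0 e * rnorm (vec ω) ^ 2)
            - rnorm (vec ω)
            = (t - ω.w 0 e * rnorm (vec ω)) ^ 2 / (2 * t * ω.w 0 e) := by
          field_simp
          ring
        have h3 : 0 < 2 * t * ω.w 0 e := by positivity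
        nlinarith [div_nonneg hx h3.le]
      calc ENNReal.ofReal |hfun ω|
          ≤ ENNReal.ofReal (t / 2 * (1 / ω.w 0 e)
            + 1 / (2 * t) * (ω.w 0 e * rnorm (vec ω) ^ 2)) :=
            ENNReal.ofReal_le_ofReal hreal
        _ = ENNReal.ofReal (t / 2 * (1 / ω.w 0 e))
            + ENNReal.ofReal (1 / (2 * t) * (ω.w 0 e * rnorm (vec ω) ^ 2)) :=
            ENNReal.ofReal_add (by positivity) (by positivity)
        _ = ENNReal.ofReal (t / 2) * (ENNReal.ofReal (ω.w 0 e))⁻¹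
            + ENNReal.ofReal (1 / (2 * t)) * ENNReal.ofReal (ω.w 0 e * rnorm (vec ω) ^ 2) := by
            rw [ENNReal.ofReal_mul (by positivity), ENNReal.ofReal_mul (by positivity)]
            congr 1
            rw [one_div, ENNReal.ofReal_inv_of_pos hw]
    have hm1 : Measurable fun ω : Cfg d =>
        ENNReal.ofReal (t / 2) * (ENNReal.ofReal (ω.w 0 e))⁻¹ :=
      ((measurable_w_apply 0 e).ennreal_ofReal.inv).const_mul _
    have hm2 : Measurable fun ω : Cfg d =>
        ENNReal.ofReal (ω.w 0 e * rnorm (vec ω) ^ 2) :=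
      ((measurable_w_apply 0 e).mul
        (((continuous_rnorm.measurable.comp hvecmeas)).pow_const 2)).ennreal_ofReal
    have hlint : ∫⁻ ω, ENNReal.ofReal |hfun ω| ∂P
        ≤ ENNReal.ofReal (t / 2) * I + ENNReal.ofReal (1 / (2 * t)) * δ m := by
      refine le_trans (lintegral_mono_ae hptwise) ?_
      rw [lintegral_add_left hm1, lintegral_const_mul _ (f := fun ω : Cfg d => (ENNReal.ofReal (ω.w 0 e))⁻¹) ((measurable_w_apply 0 e).ennreal_ofReal.inv),
        lintegral_const_mul _ hm2]
    have hfirst : ENNReal.ofReal (t / 2) * I ≤ ENNReal.ofReal (ε / 2) := by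
      rw [← ENNReal.ofReal_toReal hItop, ← ENNReal.ofReal_mul (by positivity)]
      refine ENNReal.ofReal_le_ofReal ?_
      have h1 : I.toReal ≤ J := by rw [hJ]; linarith [ENNReal.toReal_nonneg (a := I)]
      have h2 : t * J = ε := by rw [ht]; field_simp
      have h3 : t / 2 * I.toReal ≤ t / 2 * J := by
        apply mul_le_mul_of_nonneg_left h1 (by positivity)
      calc t / 2 * I.toReal ≤ t / 2 * J := h3
        _ = ε / 2 := by rw [← h2]; ring
    have hsecond : ENNReal.ofReal (1 / (2 * t)) * δ m ≤ ENNReal.ofReal (ε / 2) := by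
      have h1 : ENNReal.ofReal (1 / (2 * t)) * δ m
          ≤ ENNReal.ofReal (1 / (2 * t))
            * (ENNReal.ofReal (ε / 2) / ENNReal.ofReal (1 / (2 * t))) :=
        mul_le_mul_right hm.le _
      refine le_trans h1 ?_
      rw [mul_comm, ENNReal.div_mul_cancel (ENNReal.ofReal_pos.mpr (by positivity)).ne'
        ENNReal.ofReal_ne_top]
    have htotal : ∫⁻ ω, ENNReal.ofReal |hfun ω| ∂P ≤ ENNReal.ofReal ε := by
      refine le_trans hlint (le_trans (add_le_add hfirst hsecond) ?_)
      rw [← ENNReal.ofReal_add (by positivity) (by positivity)]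
      refine ENNReal.ofReal_le_ofReal (by linarith)
    have hhi : Integrable hfun P := by
      refine ⟨hhm.aestronglyMeasurable, ?_⟩
      rw [hasFiniteIntegral_iff_norm]
      simp only [Real.norm_eq_abs]
      exact lt_of_le_of_lt htotal ENNReal.ofReal_lt_top
    have hint : ∫ ω, |hfun ω| ∂P ≤ ε := by
      rw [integral_eq_lintegral_of_nonneg_ae (Filter.Eventually.of_forall fun ω => abs_nonneg _)
        hhm.abs.aestronglyMeasurable]
      calc (∫⁻ ω, ENNReal.ofReal |hfun ω| ∂P).toReal
          ≤ (ENNReal.ofReal ε).toReal :=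
            ENNReal.toReal_mono ENNReal.ofReal_ne_top htotal
        _ = ε := ENNReal.toReal_ofReal hε.le
    refine ⟨g, hfun, K, (measurable_pi_apply i).comp hφmeas, fun ω => hK ω i,
      hhm, hhi, hint, fun ω => by show χ ω e i = _; rw [hhfun]; ring⟩
  have hall := ae_all_iff.mpr main
  filter_upwards [hall] with ω hω
  rw [tendsto_pi_nhds]
  intro i
  have h1 := hω i
  have hrw : (fun n : ℕ => ((n : ℝ)⁻¹ • χ ω ((n : ℤ) • e)) i)
      = fun n : ℕ => birkhoffSum (shiftC e) (fun ω' => χ ω' e i) n ω / n := by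
    funext n
    have hco := cocycle hzero hcov e n ω
    calc ((n : ℝ)⁻¹ • χ ω ((n : ℤ) • e)) i
        = (n : ℝ)⁻¹ * (χ ω ((n : ℤ) • e) i) := rfl
      _ = (n : ℝ)⁻¹ * (birkhoffSum (shiftC e) (fun ω' => χ ω' e) n ω i) := by rw [hco]
      _ = (n : ℝ)⁻¹ * birkhoffSum (shiftC e) (fun ω' => χ ω' e i) n ω := by
          unfold birkhoffSum
          rw [Finset.sum_apply]
      _ = birkhoffSum (shiftC e) (fun ω' => χ ω' e i) n ω / n := by
          rw [inv_mul_eq_div]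
  rw [show ((0 : Fin d → ℝ) i) = 0 from rfl]
  rw [hrw]
  exact h1

end RCM
end
end

section
/- Let d ≥ 1, fix ε > 0 and K < ∞, and let χ: ℤ^d → ℝ^d be any function. Call a vertex x ∈ ℤ^d (K,ε)-good if |χ(x + nê) − χ(x)| ≤ K + ε|n| for every n ∈ ℤ and every coordinate unit vector ê ∈ {ê_1,…,ê_d}, and let 𝔾 denote the set of (K,ε)-good vertices. Then for each n ≥ 1 there exists a set A ⊂ 𝔾 ∩ Λ_n, where Λ_n := [−n,n]^d ∩ ℤ^d, with the properties: |A| ≥ (2^dη − 2^d + 1)|Λ_n|, where η := |𝔾 ∩ Λ_n|/|Λ_n|, and |χ(y) − χ(x)| ≤ 2d[K + ε(2n+1)] for all x,y ∈ A. -/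
open Set

noncomputable section

namespace RCM

/-- The box `Λ_n = [−n,n]^d ∩ ℤ^d`. -/
def box (d n : ℕ) : Set (V d) := {x | ∀ i, |x i| ≤ (n : ℤ)}

/-- The set of `(K,ε)`-good vertices for the function `χ`: those `x` with
`|χ(x + nê) − χ(x)| ≤ K + ε|n|` for every `n ∈ ℤ` and every coordinate direction `ê`. -/
def goodSet {d : ℕ} (K ε : ℝ) (χ : V d → Fin d → ℝ) : Set (V d) :=
  {x | ∀ (m : ℤ) (i : Fin d), rnorm (χ (x + m • unit i) - χ x) ≤ K + ε * |(m : ℝ)|}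

lemma rnorm_eq {d : ℕ} (y : Fin d → ℝ) :
    rnorm y = ‖(WithLp.linearEquiv 2 ℝ (Fin d → ℝ)).symm y‖ := by
  rw [EuclideanSpace.norm_eq]
  unfold rnorm
  congr 1
  apply Finset.sum_congr rfl
  intro i _
  simp [WithLp.linearEquiv, Real.norm_eq_abs, sq_abs]

lemma rnorm_sum_le {d : ℕ} {ι : Type*} (s : Finset ι) (g : ι → Fin d → ℝ) :
    rnorm (∑ i ∈ s, g i) ≤ ∑ i ∈ s, rnorm (g i) := by
  rw [rnorm_eq, map_sum]
  refine (norm_sum_le _ _).trans_eq ?_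
  simp [rnorm_eq]

lemma rnorm_add_le {d : ℕ} (a b : Fin d → ℝ) : rnorm (a + b) ≤ rnorm a + rnorm b := by
  rw [rnorm_eq, rnorm_eq, rnorm_eq, map_add]
  exact norm_add_le _ _

lemma rnorm_sub_comm {d : ℕ} (a b : Fin d → ℝ) : rnorm (a - b) = rnorm (b - a) := by
  rw [rnorm_eq, rnorm_eq, map_sub, map_sub, norm_sub_rev]

def interp {d : ℕ} (x w : V d) (k : ℕ) : V d := fun i => if (i : ℕ) < k then x i else w i

lemma interp_zero {d : ℕ} (x w : V d) : interp x w 0 = w := by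
  funext i; simp [interp]

lemma interp_self {d : ℕ} (x w : V d) : interp x w d = x := by
  funext i; simp [interp, i.isLt]

lemma interp_interp {d : ℕ} (x w : V d) (k : ℕ) :
    interp (interp x w k) (interp w x k) k = x := by
  funext i; by_cases h : (i : ℕ) < k <;> simp [interp, h]

lemma interp_step {d : ℕ} (x w : V d) (k : ℕ) (hk : k < d) :
    interp x w k = interp x w (k + 1) + (w ⟨k, hk⟩ - x ⟨k, hk⟩) • unit ⟨k, hk⟩ := by
  funext i
  simp only [interp, Pi.add_apply, Pi.smul_apply, unit, smul_eq_mul]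
  rcases lt_trichotomy (i : ℕ) k with h | h | h
  · have h1 : (i : ℕ) < k + 1 := by omega
    have h2 : i ≠ ⟨k, hk⟩ := by simp [Fin.ext_iff]; omega
    simp [h, h1, h2]
  · have h1 : (i : ℕ) < k + 1 := by omega
    have h2 : i = ⟨k, hk⟩ := by simp [Fin.ext_iff]; omega
    subst h2
    simp [h, h1]
  · have h0 : ¬ (i : ℕ) < k := by omega
    have h1 : ¬ (i : ℕ) < k + 1 := by omega
    have h2 : i ≠ ⟨k, hk⟩ := by simp [Fin.ext_iff]; omega
    simp [h0, h1, h2]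

lemma path_bound {d : ℕ} (K ε : ℝ) (χ : V d → Fin d → ℝ) (n : ℕ)
    (x w : V d) (hx : ∀ i, |x i| ≤ (n : ℤ)) (hw : ∀ i, |w i| ≤ (n : ℤ))
    (hε : 0 < ε)
    (hg : ∀ k, 1 ≤ k → k ≤ d → interp x w k ∈ goodSet K ε χ) :
    rnorm (χ x - χ w) ≤ d * (K + ε * (2 * n + 1)) := by
  have htel : χ x - χ w
      = ∑ k ∈ Finset.range d, (χ (interp x w (k + 1)) - χ (interp x w k)) := by
    rw [Finset.sum_range_sub (fun k => χ (interp x w k)), interp_zero, interp_self]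
  rw [htel]
  refine (rnorm_sum_le _ _).trans ?_
  have hterm : ∀ k ∈ Finset.range d,
      rnorm (χ (interp x w (k + 1)) - χ (interp x w k)) ≤ K + ε * (2 * n + 1) := by
    intro k hk
    rw [Finset.mem_range] at hk
    set m : ℤ := w ⟨k, hk⟩ - x ⟨k, hk⟩ with hm
    have hgood := hg (k + 1) (by omega) (by omega)
    have step := hgood m ⟨k, hk⟩
    rw [← interp_step x w k hk] at step
    rw [rnorm_sub_comm]
    refine step.trans ?_
    have h1 := hx ⟨k, hk⟩
    have h2 := hw ⟨k, hk⟩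
    have h3 : |m| ≤ 2 * (n : ℤ) + 1 := by rw [abs_le] at *; omega
    have h4 : |(m : ℝ)| ≤ 2 * (n : ℝ) + 1 := by
      rw [← Int.cast_abs]
      calc ((|m| : ℤ) : ℝ) ≤ ((2 * (n : ℤ) + 1 : ℤ) : ℝ) := by exact_mod_cast h3
        _ = 2 * (n : ℝ) + 1 := by push_cast; ring
    nlinarith
  calc ∑ k ∈ Finset.range d, rnorm (χ (interp x w (k + 1)) - χ (interp x w k))
      ≤ ∑ _k ∈ Finset.range d, (K + ε * (2 * n + 1)) := Finset.sum_le_sum hterm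
    _ = d * (K + ε * (2 * n + 1)) := by
        simp [Finset.sum_const, Finset.card_range]; ring

def boxF (d n : ℕ) : Finset (V d) := Fintype.piFinset fun _ => Finset.Icc (-(n : ℤ)) n

lemma mem_boxF {d n : ℕ} {x : V d} : x ∈ boxF d n ↔ ∀ i, |x i| ≤ (n : ℤ) := by
  simp [boxF, Fintype.mem_piFinset, abs_le, Finset.mem_Icc]

lemma coe_boxF (d n : ℕ) : (boxF d n : Set (V d)) = box d n := by
  ext x; simp [mem_boxF, box]

lemma interp_mem_boxF {d n : ℕ} {x w : V d} (hx : x ∈ boxF d n) (hw : w ∈ boxF d n)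
    (k : ℕ) : interp x w k ∈ boxF d n := by
  rw [mem_boxF] at *
  intro i
  unfold interp
  split
  · exact hx i
  · exact hw i

lemma card_filter_prod {α β : Type*} (s : Finset α) (t : Finset β) (Q : α → β → Prop)
    [∀ a b, Decidable (Q a b)] :
    ∑ w ∈ t, (s.filter (fun x => Q x w)).card
      = ((s ×ˢ t).filter (fun z => Q z.1 z.2)).card := by
  rw [Finset.card_filter, Finset.sum_product_right]
  refine Finset.sum_congr rfl fun w _ => ?_
  rw [Finset.card_filter]

/-- (Deterministic pigeon-hole lemma for good vertices)
Let `d ≥ 1`, `ε > 0`, `K < ∞`, and let `χ : ℤ^d → ℝ^d` be arbitrary.  Then for each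
`n ≥ 1` there is a set `A ⊆ 𝔾 ∩ Λ_n` of `(K,ε)`-good vertices in the box `Λ_n` with
`|A| ≥ (2^dη − 2^d + 1)|Λ_n|`, where `η = |𝔾 ∩ Λ_n|/|Λ_n|`, such that
`|χ(y) − χ(x)| ≤ 2d[K + ε(2n+1)]` for all `x, y ∈ A`. -/
theorem statement13 {d : ℕ} (hd : 1 ≤ d) (ε K : ℝ) (hε : 0 < ε)
    (χ : V d → Fin d → ℝ) (n : ℕ) (hn : 1 ≤ n) :
    ∃ A : Set (V d),
      A ⊆ goodSet K ε χ ∩ box d n ∧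
      ((2:ℝ) ^ d * (((goodSet K ε χ ∩ box d n).ncard : ℝ) / ((box d n).ncard : ℝ))
          - 2 ^ d + 1) * ((box d n).ncard : ℝ) ≤ (A.ncard : ℝ) ∧
      ∀ x ∈ A, ∀ y ∈ A, rnorm (χ y - χ x) ≤ 2 * d * (K + ε * (2 * n + 1)) := by
  classical
  have hzero : (0 : V d) ∈ boxF d n := by rw [mem_boxF]; intro i; simp
  have hBne : (boxF d n).Nonempty := ⟨0, hzero⟩
  have hNpos : 0 < (boxF d n).card := Finset.card_pos.mpr hBne
  -- involution count
  have hpair : ∀ k : ℕ,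
      ((boxF d n ×ˢ boxF d n).filter (fun z => interp z.1 z.2 k ∉ goodSet K ε χ)).card
        = ((boxF d n ×ˢ boxF d n).filter (fun z => z.1 ∉ goodSet K ε χ)).card := by
    intro k
    refine Finset.card_bij' (fun z _ => (interp z.1 z.2 k, interp z.2 z.1 k))
      (fun z _ => (interp z.1 z.2 k, interp z.2 z.1 k)) ?_ ?_ ?_ ?_
    · intro z hz
      simp only [Finset.mem_filter, Finset.mem_product] at hz ⊢
      exact ⟨⟨interp_mem_boxF hz.1.1 hz.1.2 k, interp_mem_boxF hz.1.2 hz.1.1 k⟩, hz.2⟩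
    · intro z hz
      simp only [Finset.mem_filter, Finset.mem_product] at hz ⊢
      refine ⟨⟨interp_mem_boxF hz.1.1 hz.1.2 k, interp_mem_boxF hz.1.2 hz.1.1 k⟩, ?_⟩
      rw [interp_interp]
      exact hz.2
    · intro z hz
      simp [interp_interp]
    · intro z hz
      simp [interp_interp]
  have hprodcard :
      ((boxF d n ×ˢ boxF d n).filter (fun z => z.1 ∉ goodSet K ε χ)).card
        = ((boxF d n).filter (fun x => x ∉ goodSet K ε χ)).card * (boxF d n).card := by
    rw [show (boxF d n ×ˢ boxF d n).filter (fun z => z.1 ∉ goodSet K ε χ)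
        = ((boxF d n).filter (fun x => x ∉ goodSet K ε χ)) ×ˢ boxF d n by
      ext z; simp only [Finset.mem_filter, Finset.mem_product]; tauto]
    exact Finset.card_product _ _
  have hsum : ∑ w ∈ boxF d n, ∑ k ∈ Finset.Icc 1 d,
        ((boxF d n).filter (fun x => interp x w k ∉ goodSet K ε χ)).card
      = ∑ _w ∈ boxF d n, d * ((boxF d n).filter (fun x => x ∉ goodSet K ε χ)).card := by
    rw [Finset.sum_comm]
    have hk : ∀ k ∈ Finset.Icc 1 d,
        ∑ w ∈ boxF d n, ((boxF d n).filter (fun x => interp x w k ∉ goodSet K ε χ)).card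
          = ((boxF d n).filter (fun x => x ∉ goodSet K ε χ)).card * (boxF d n).card := by
      intro k _
      rw [card_filter_prod (boxF d n) (boxF d n) (fun x w => interp x w k ∉ goodSet K ε χ),
        hpair k, hprodcard]
    rw [Finset.sum_congr rfl hk, Finset.sum_const, Finset.sum_const, Nat.card_Icc,
      smul_eq_mul, smul_eq_mul, Nat.add_sub_cancel]
    ring
  obtain ⟨w, hwB, hwS⟩ := Finset.exists_le_of_sum_le hBne (le_of_eq hsum)
  -- the bad region and the set A
  set S : Finset (V d) := (Finset.Icc 1 d).biUnion
    (fun k => (boxF d n).filter (fun x => interp x w k ∉ goodSet K ε χ)) with hSdef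
  have hSsub : S ⊆ boxF d n :=
    Finset.biUnion_subset.mpr fun k _ => Finset.filter_subset _ _
  set AF : Finset (V d) := boxF d n \ S with hAFdef
  have hAFgood : ∀ x ∈ AF, ∀ k, 1 ≤ k → k ≤ d → interp x w k ∈ goodSet K ε χ := by
    intro x hx k hk1 hk2
    rw [hAFdef, Finset.mem_sdiff] at hx
    by_contra hbad
    exact hx.2 (Finset.mem_biUnion.mpr ⟨k, Finset.mem_Icc.mpr ⟨hk1, hk2⟩,
      Finset.mem_filter.mpr ⟨hx.1, hbad⟩⟩)
  refine ⟨(AF : Set (V d)), ?_, ?_, ?_⟩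
  · intro x hx
    have hx' : x ∈ AF := hx
    have hxB : x ∈ boxF d n := (Finset.mem_sdiff.mp hx').1
    have hg := hAFgood x hx' d hd le_rfl
    rw [interp_self] at hg
    exact ⟨hg, by rw [← coe_boxF]; exact hxB⟩
  · -- cardinality bound
    have hScard : S.card ≤ ∑ k ∈ Finset.Icc 1 d,
        ((boxF d n).filter (fun x => interp x w k ∉ goodSet K ε χ)).card :=
      Finset.card_biUnion_le
    have hAFcard : AF.card = (boxF d n).card - S.card := Finset.card_sdiff_of_subset hSsub
    have hSle : S.card ≤ (boxF d n).card := Finset.card_le_card hSsub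
    have hkey : (boxF d n).card
        ≤ AF.card + d * ((boxF d n).filter (fun x => x ∉ goodSet K ε χ)).card := by
      have := hScard.trans hwS
      omega
    have hgb : ((boxF d n).filter (fun x => x ∈ goodSet K ε χ)).card
        + ((boxF d n).filter (fun x => x ∉ goodSet K ε χ)).card = (boxF d n).card :=
      Finset.card_filter_add_card_filter_not (fun x => x ∈ goodSet K ε χ)
    have hbox : (box d n).ncard = (boxF d n).card := by
      rw [← coe_boxF, Set.ncard_coe_finset]
    have hgood : (goodSet K ε χ ∩ box d n).ncard
        = ((boxF d n).filter (fun x => x ∈ goodSet K ε χ)).card := by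
      rw [show goodSet K ε χ ∩ box d n
          = ↑((boxF d n).filter (fun x => x ∈ goodSet K ε χ)) by
        ext x
        simp only [Finset.coe_filter, Set.mem_setOf_eq, Set.mem_inter_iff, ← coe_boxF]
        exact ⟨fun h => ⟨h.2, h.1⟩, fun h => ⟨h.2, h.1⟩⟩]
      exact Set.ncard_coe_finset _
    have hAcard : (AF : Set (V d)).ncard = AF.card := Set.ncard_coe_finset _
    rw [hbox, hgood, hAcard]
    set N : ℝ := ((boxF d n).card : ℝ) with hNdef
    set g : ℝ := (((boxF d n).filter (fun x => x ∈ goodSet K ε χ)).card : ℝ) with hgdef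
    set b : ℝ := (((boxF d n).filter (fun x => x ∉ goodSet K ε χ)).card : ℝ) with hbdef
    have hN : (0:ℝ) < N := by rw [hNdef]; exact_mod_cast hNpos
    have hdiv : g / N * N = g := div_mul_cancel₀ _ (ne_of_gt hN)
    have hd2 : (d : ℝ) ≤ 2 ^ d := by exact_mod_cast (Nat.lt_two_pow_self (n := d)).le
    have hb0 : (0:ℝ) ≤ b := by rw [hbdef]; exact Nat.cast_nonneg _
    have hkeyR : N ≤ (AF.card : ℝ) + (d : ℝ) * b := by
      rw [hNdef, hbdef]
      exact_mod_cast hkey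
    have hgbR : g + b = N := by rw [hNdef, hgdef, hbdef]; exact_mod_cast hgb
    have hdb : (d : ℝ) * b ≤ 2 ^ d * b := mul_le_mul_of_nonneg_right hd2 hb0
    have hexp : (2:ℝ) ^ d * g + 2 ^ d * b = 2 ^ d * N := by rw [← hgbR]; ring
    rw [add_mul, sub_mul, one_mul, mul_assoc, hdiv]
    linarith
  · -- diameter bound
    intro x hx y hy
    have hxd : x ∈ AF := hx
    have hyd : y ∈ AF := hy
    have hxbox : ∀ i, |x i| ≤ (n : ℤ) := mem_boxF.mp (Finset.mem_sdiff.mp hxd).1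
    have hybox : ∀ i, |y i| ≤ (n : ℤ) := mem_boxF.mp (Finset.mem_sdiff.mp hyd).1
    have hwbox : ∀ i, |w i| ≤ (n : ℤ) := mem_boxF.mp hwB
    have h1 := path_bound K ε χ n y w hybox hwbox hε (hAFgood y hyd)
    have h2 := path_bound K ε χ n x w hxbox hwbox hε (hAFgood x hxd)
    have hsplit : χ y - χ x = (χ y - χ w) + (χ w - χ x) := by abel
    rw [hsplit]
    refine (rnorm_add_le _ _).trans ?_
    rw [rnorm_sub_comm (χ w) (χ x)]
    calc rnorm (χ y - χ w) + rnorm (χ x - χ w)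
        ≤ d * (K + ε * (2 * n + 1)) + d * (K + ε * (2 * n + 1)) := add_le_add h1 h2
      _ = 2 * d * (K + ε * (2 * n + 1)) := by ring


end RCM
end
end
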